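/- Let B be a J × J real matrix with nonnegative entries, and suppose there exists a vector p ∈ ℝᴶ with all entries strictly positive such that all entries of p − Bp are strictly positive (B is 'productive' or 'Leontief'). Then the matrix I − B is invertible, and every entry of (I − B)⁻¹ is nonnegative. -/
import Mathlib

/-- Key monotonicity lemma: if `B` is nonnegative and productive with witness `p`,
and `(1 - B) *ᵥ x` is entrywise nonnegative, then `x` is entrywise nonnegative. -/
lemma leontief_aux
    (J : ℕ) (hJ : 0 < J) (B : Matrix (Fin J) (Fin J) ℝ)
    (hB : ∀ i j, 0 ≤ B i j)
    (p : Fin J → ℝ) (hp : ∀ i, 0 < p i)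
    (hprod : ∀ i, 0 < (p - B.mulVec p) i)
    (x : Fin J → ℝ) (hx : ∀ i, 0 ≤ ((1 - B).mulVec x) i) :
    ∀ i, 0 ≤ x i := by
  by_contra h
  push_neg at h
  obtain ⟨k, hk⟩ := h
  haveI : Nonempty (Fin J) := ⟨⟨0, hJ⟩⟩
  obtain ⟨i₀, hi₀⟩ := Finite.exists_min (fun i => x i / p i)
  set t := x i₀ / p i₀ with ht
  have htneg : t < 0 := by
    have := hi₀ k
    have hk' : x k / p k < 0 := div_neg_of_neg_of_pos hk (hp k)
    linarith
  have hge : ∀ j, t * p j ≤ x j := by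
    intro j
    have h1 : t ≤ x j / p j := hi₀ j
    calc t * p j ≤ (x j / p j) * p j := by
          exact mul_le_mul_of_nonneg_right h1 (hp j).le
      _ = x j := div_mul_cancel₀ _ (hp j).ne'
  have hxi₀ : x i₀ = t * p i₀ := by
    rw [ht, div_mul_cancel₀ _ (hp i₀).ne']
  have hBx : t * (B.mulVec p) i₀ ≤ (B.mulVec x) i₀ := by
    simp only [Matrix.mulVec, dotProduct, Finset.mul_sum]
    apply Finset.sum_le_sum
    intro j _
    calc t * (B i₀ j * p j) = B i₀ j * (t * p j) := by ring
      _ ≤ B i₀ j * x j := mul_le_mul_of_nonneg_left (hge j) (hB i₀ j)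
  have hy := hx i₀
  have hmv : ((1 - B).mulVec x) i₀ = x i₀ - (B.mulVec x) i₀ := by
    simp [Matrix.sub_mulVec, Matrix.one_mulVec]
  have hpos : 0 < (p - B.mulVec p) i₀ := hprod i₀
  have hpe : (p - B.mulVec p) i₀ = p i₀ - (B.mulVec p) i₀ := rfl
  nlinarith [hy, hmv, hBx, hxi₀, htneg, hpos]

/-- If `B` is a `J × J` matrix with nonnegative entries and there exists a
strictly positive vector `p` with `p - B *ᵥ p` strictly positive entrywise
(`B` is "productive"/"Leontief"), then `I - B` is invertible and every entry
of `(I - B)⁻¹` is nonnegative. -/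
theorem leontief_inverse_exists_nonneg
    (J : ℕ) (hJ : 0 < J) (B : Matrix (Fin J) (Fin J) ℝ)
    (hB : ∀ i j, 0 ≤ B i j)
    (p : Fin J → ℝ) (hp : ∀ i, 0 < p i)
    (hprod : ∀ i, 0 < (p - B.mulVec p) i) :
    IsUnit (1 - B) ∧ ∀ i j, 0 ≤ (1 - B)⁻¹ i j := by
  have key := leontief_aux J hJ B hB p hp hprod
  have hdet : (1 - B).det ≠ 0 := by
    intro hdet
    obtain ⟨v, hv0, hv⟩ := (Matrix.exists_mulVec_eq_zero_iff).mpr hdet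
    have h1 : ∀ i, 0 ≤ v i := key v (by intro i; rw [hv]; simp)
    have h2 : ∀ i, 0 ≤ (-v) i := by
      apply key
      intro i
      rw [Matrix.mulVec_neg, hv]
      simp
    apply hv0
    funext i
    have := h2 i
    simp only [Pi.neg_apply, neg_nonneg] at this
    exact le_antisymm this (h1 i)
  have hunit : IsUnit (1 - B) :=
    (Matrix.isUnit_iff_isUnit_det _).mpr (isUnit_iff_ne_zero.mpr hdet)
  refine ⟨hunit, fun i j => ?_⟩
  have hmul : (1 - B) * (1 - B)⁻¹ = 1 :=
    Matrix.mul_nonsing_inv _ (isUnit_iff_ne_zero.mpr hdet)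
  have hx : ∀ i, 0 ≤ ((1 - B).mulVec ((1 - B)⁻¹.mulVec (Pi.single j 1))) i := by
    intro i
    rw [Matrix.mulVec_mulVec, hmul, Matrix.one_mulVec]
    by_cases hij : i = j <;> simp [hij, Pi.single_apply]
  have := key _ hx i
  simpa using this
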